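/- If $M$ is an $N\times N$ Manin matrix (i.e., entries in each column commute among themselves, and $[M_{ij},M_{kl}] = [M_{kj},M_{il}]$ for all $i,j,k,l$) with entries in an associative algebra, then exchanging any two columns of $M$ changes the column-ordered determinant $\mathrm{cdet}\, M$ by a sign. -/
import Mathlib


/-- The column-ordered determinant of a square matrix with entries in a possibly
noncommutative ring: entries are multiplied left-to-right in column order. -/
def cdet {A : Type*} [Ring A] {n : ℕ} (M : Matrix (Fin n) (Fin n) A) : A :=
  ∑ σ : Equiv.Perm (Fin n), ((Equiv.Perm.sign σ : ℤ) • (List.ofFn fun j => M (σ j) j).prod)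

/-- A Manin matrix: entries of a common column commute, and cross-commutators
of `2 × 2` submatrices agree. -/
def IsManin {A : Type*} [Ring A] {m n : Type*} (M : Matrix m n A) : Prop :=
  (∀ i k j, Commute (M i j) (M k j)) ∧
  (∀ i k j l, M i j * M k l - M k l * M i j = M k j * M i l - M i l * M k j)

section Aux

variable {A : Type*} [Ring A]

private lemma prod_split_aux (p q : List A) (a b c d : A) :
    (p ++ a :: b :: q).prod - (p ++ c :: d :: q).prod
      = p.prod * (a * b - c * d) * q.prod := by
  simp only [List.prod_append, List.prod_cons]
  rw [mul_sub, sub_mul]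
  rw [mul_assoc, mul_assoc, mul_assoc, mul_assoc]

private lemma ofFn_split {N : ℕ} (f : Fin N → A) (k : ℕ) (hk : k + 1 < N) :
    List.ofFn f = (List.ofFn f).take k ++
      f ⟨k, by omega⟩ :: f ⟨k + 1, hk⟩ :: (List.ofFn f).drop (k + 2) := by
  have h1 : k < (List.ofFn f).length := by simp; omega
  have h2 : k + 1 < (List.ofFn f).length := by simp; omega
  conv_lhs => rw [← List.take_append_drop k (List.ofFn f)]
  rw [List.drop_eq_getElem_cons h1, List.drop_eq_getElem_cons h2]
  simp [List.getElem_ofFn]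

private lemma take_congr_aux {N : ℕ} (f g : Fin N → A) (k : ℕ)
    (h : ∀ t : Fin N, (t : ℕ) < k → f t = g t) :
    (List.ofFn f).take k = (List.ofFn g).take k := by
  apply List.ext_getElem (by simp)
  intro n h1 h2
  simp only [List.getElem_take, List.getElem_ofFn]
  apply h
  simp only [List.length_take, List.length_ofFn, lt_min_iff] at h1
  exact h1.1

private lemma drop_congr_aux {N : ℕ} (f g : Fin N → A) (k : ℕ)
    (h : ∀ t : Fin N, k ≤ (t : ℕ) → f t = g t) :
    (List.ofFn f).drop k = (List.ofFn g).drop k := by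
  apply List.ext_getElem (by simp)
  intro n h1 h2
  simp only [List.getElem_drop, List.getElem_ofFn]
  apply h
  simp

private lemma isManin_submatrix {N : ℕ} {M : Matrix (Fin N) (Fin N) A} (hM : IsManin M)
    (e : Equiv.Perm (Fin N)) : IsManin (M.submatrix id e) :=
  ⟨fun i k j => hM.1 i k (e j), fun i k j l => hM.2 i k (e j) (e l)⟩

private lemma cdet_swap_adj {N : ℕ} (M : Matrix (Fin N) (Fin N) A) (hM : IsManin M)
    (k : ℕ) (hk : k + 1 < N) :
    cdet (M.submatrix id (Equiv.swap ⟨k, by omega⟩ ⟨k + 1, hk⟩)) = - cdet M := by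
  set a : Fin N := ⟨k, by omega⟩ with ha
  set b : Fin N := ⟨k + 1, hk⟩ with hb
  have hab : a ≠ b := by simp [ha, hb, Fin.ext_iff]
  set s := Equiv.swap a b with hs
  have hsne : ∀ t : Fin N, (t : ℕ) ≠ k → (t : ℕ) ≠ k + 1 → s t = t := fun t h1 h2 =>
    Equiv.swap_apply_of_ne_of_ne (fun h => h1 (congrArg Fin.val h))
      (fun h => h2 (congrArg Fin.val h))
  set pre : Equiv.Perm (Fin N) → A :=
    fun σ => ((List.ofFn fun t => M (σ t) t).take k).prod with hpre
  set post : Equiv.Perm (Fin N) → A :=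
    fun σ => ((List.ofFn fun t => M (σ t) t).drop (k + 2)).prod with hpost
  set mid : Equiv.Perm (Fin N) → A :=
    fun σ => M (σ a) b * M (σ b) a - M (σ b) a * M (σ a) b with hmid
  set F : Equiv.Perm (Fin N) → A :=
    fun σ => (Equiv.Perm.sign σ : ℤ) • (pre σ * mid σ * post σ) with hF
  have hsign : ∀ σ : Equiv.Perm (Fin N),
      ((Equiv.Perm.sign (σ * s) : ℤ) : ℤ) = - (Equiv.Perm.sign σ : ℤ) := by
    intro σ
    rw [Equiv.Perm.sign_mul, hs, Equiv.Perm.sign_swap hab]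
    simp
  have hcM : cdet M = ∑ σ : Equiv.Perm (Fin N),
      ((Equiv.Perm.sign (σ * s) : ℤ) • (List.ofFn fun t => M ((σ * s) t) t).prod) := by
    unfold cdet
    exact (Fintype.sum_equiv (Equiv.mulRight s) _ _ (fun σ => rfl)).symm
  have key : ∀ σ : Equiv.Perm (Fin N),
      ((Equiv.Perm.sign σ : ℤ) • (List.ofFn fun t => (M.submatrix id s) (σ t) t).prod)
        + ((Equiv.Perm.sign (σ * s) : ℤ) • (List.ofFn fun t => M ((σ * s) t) t).prod)
        = F σ := by
    intro σ
    have hAB : (List.ofFn fun t => (M.submatrix id s) (σ t) t).prod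
        - (List.ofFn fun t => M ((σ * s) t) t).prod = pre σ * mid σ * post σ := by
      rw [ofFn_split (fun t => (M.submatrix id s) (σ t) t) k hk,
        ofFn_split (fun t => M ((σ * s) t) t) k hk]
      have ht1 : ((List.ofFn fun t => (M.submatrix id s) (σ t) t).take k)
          = ((List.ofFn fun t => M (σ t) t).take k) := by
        apply take_congr_aux
        intro t ht
        simp only [Matrix.submatrix_apply, id_eq]
        rw [hsne t (by omega) (by omega)]
      have ht2 : ((List.ofFn fun t => M ((σ * s) t) t).take k)
          = ((List.ofFn fun t => M (σ t) t).take k) := by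
        apply take_congr_aux
        intro t ht
        rw [Equiv.Perm.mul_apply, hsne t (by omega) (by omega)]
      have hd1 : ((List.ofFn fun t => (M.submatrix id s) (σ t) t).drop (k + 2))
          = ((List.ofFn fun t => M (σ t) t).drop (k + 2)) := by
        apply drop_congr_aux
        intro t ht
        simp only [Matrix.submatrix_apply, id_eq]
        rw [hsne t (by omega) (by omega)]
      have hd2 : ((List.ofFn fun t => M ((σ * s) t) t).drop (k + 2))
          = ((List.ofFn fun t => M (σ t) t).drop (k + 2)) := by
        apply drop_congr_aux
        intro t ht
        rw [Equiv.Perm.mul_apply, hsne t (by omega) (by omega)]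
      rw [ht1, ht2, hd1, hd2, prod_split_aux]
      have e1 : (M.submatrix id s) (σ ⟨k, by omega⟩) ⟨k, by omega⟩ = M (σ a) b := by
        simp only [Matrix.submatrix_apply, id_eq]
        exact congrArg (M (σ a)) (Equiv.swap_apply_left a b)
      have e2 : (M.submatrix id s) (σ ⟨k + 1, hk⟩) ⟨k + 1, hk⟩ = M (σ b) a := by
        simp only [Matrix.submatrix_apply, id_eq]
        exact congrArg (M (σ b)) (Equiv.swap_apply_right a b)
      have e3 : M ((σ * s) ⟨k, by omega⟩) ⟨k, by omega⟩ = M (σ b) a := by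
        rw [Equiv.Perm.mul_apply]
        exact congrArg (fun x => M (σ x) a) (Equiv.swap_apply_left a b)
      have e4 : M ((σ * s) ⟨k + 1, hk⟩) ⟨k + 1, hk⟩ = M (σ a) b := by
        rw [Equiv.Perm.mul_apply]
        exact congrArg (fun x => M (σ x) b) (Equiv.swap_apply_right a b)
      rw [e1, e2, e3, e4]
    rw [hsign σ, neg_smul, ← sub_eq_add_neg, ← smul_sub, hAB]
  have hsum : cdet (M.submatrix id s) + cdet M = ∑ σ : Equiv.Perm (Fin N), F σ := by
    rw [hcM]
    unfold cdet
    rw [← Finset.sum_add_distrib]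
    exact Finset.sum_congr rfl fun σ _ => key σ
  have hzero : ∑ σ : Equiv.Perm (Fin N), F σ = 0 := by
    apply Finset.sum_involution (fun σ _ => σ * s)
    · intro σ _
      have hpre' : pre (σ * s) = pre σ := by
        apply congrArg List.prod
        apply take_congr_aux
        intro t ht
        rw [Equiv.Perm.mul_apply, hsne t (by omega) (by omega)]
      have hpost' : post (σ * s) = post σ := by
        apply congrArg List.prod
        apply drop_congr_aux
        intro t ht
        rw [Equiv.Perm.mul_apply, hsne t (by omega) (by omega)]
      have hmid' : mid (σ * s) = mid σ := by
        simp only [hmid, Equiv.Perm.mul_apply, hs, Equiv.swap_apply_left,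
          Equiv.swap_apply_right]
        exact (hM.2 (σ a) (σ b) b a).symm
      simp only [hF, hpre', hpost', hmid', hsign σ]
      rw [neg_smul]
      exact add_neg_cancel _
    · intro σ _ _
      intro hcon
      have : s = 1 := mul_left_cancel (by rw [mul_one]; exact hcon)
      rw [hs, Equiv.swap_eq_one_iff] at this
      exact hab this
    · intro σ _; exact Finset.mem_univ _
    · intro σ _
      rw [mul_assoc, hs, Equiv.swap_mul_self, mul_one]
  have hfin : cdet (M.submatrix id s) + cdet M = 0 := by rw [hsum, hzero]
  exact eq_neg_of_add_eq_zero_left hfin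

private lemma cdet_swap_gen {N : ℕ} :
    ∀ d : ℕ, ∀ M : Matrix (Fin N) (Fin N) A, IsManin M →
      ∀ i j : Fin N, (j : ℕ) = (i : ℕ) + d + 1 →
      cdet (M.submatrix id (Equiv.swap i j)) = - cdet M := by
  intro d
  induction d with
  | zero =>
    intro M hM i j h
    have hk : (i : ℕ) + 1 < N := by omega
    have hj : j = ⟨(i : ℕ) + 1, hk⟩ := Fin.ext (show (j : ℕ) = (i : ℕ) + 1 by omega)
    subst hj
    exact cdet_swap_adj M hM (i : ℕ) hk
  | succ d ih =>
    intro M hM i j h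
    have hk : (i : ℕ) + 1 < N := by omega
    set i' : Fin N := ⟨(i : ℕ) + 1, hk⟩ with hi'
    have hvi' : (i' : ℕ) = (i : ℕ) + 1 := rfl
    have hji' : j ≠ i' := by
      intro hcon
      have := congrArg Fin.val hcon
      rw [hvi'] at this
      omega
    have hji : j ≠ i := by
      intro hcon
      have := congrArg Fin.val hcon
      omega
    have hswap : Equiv.swap i j = Equiv.swap i i' * Equiv.swap i' j * Equiv.swap i i' := by
      have := Equiv.swap_mul_swap_mul_swap (x := j) (y := i') (z := i) hji' hji
      rw [Equiv.swap_comm i' i, Equiv.swap_comm j i'] at this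
      rw [← this, Equiv.swap_comm]
    have hmat : M.submatrix id (Equiv.swap i j)
        = (((M.submatrix id (Equiv.swap i i')).submatrix id
            (Equiv.swap i' j)).submatrix id (Equiv.swap i i')) := by
      ext x y
      simp only [Matrix.submatrix_apply, id_eq, hswap, Equiv.Perm.mul_apply]
    have hM1 : IsManin (M.submatrix id (Equiv.swap i i')) := isManin_submatrix hM _
    have hM2 : IsManin ((M.submatrix id (Equiv.swap i i')).submatrix id (Equiv.swap i' j)) :=
      isManin_submatrix hM1 _
    have step1 : cdet ((((M.submatrix id (Equiv.swap i i')).submatrix id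
        (Equiv.swap i' j)).submatrix id (Equiv.swap i i')))
        = - cdet ((M.submatrix id (Equiv.swap i i')).submatrix id (Equiv.swap i' j)) :=
      cdet_swap_adj _ hM2 (i : ℕ) hk
    have step2 : cdet ((M.submatrix id (Equiv.swap i i')).submatrix id (Equiv.swap i' j))
        = - cdet (M.submatrix id (Equiv.swap i i')) := by
      apply ih _ hM1 i' j
      rw [hvi']; omega
    have step3 : cdet (M.submatrix id (Equiv.swap i i')) = - cdet M :=
      cdet_swap_adj M hM (i : ℕ) hk
    rw [hmat, step1, step2, step3, neg_neg]

end Aux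

/-- Exchanging two columns of a Manin matrix changes the column-ordered
determinant by a sign. -/
theorem stmt4 {A : Type*} [Ring A] {N : ℕ} (M : Matrix (Fin N) (Fin N) A)
    (hM : IsManin M) (i j : Fin N) (hij : i ≠ j) :
    cdet (M.submatrix id (Equiv.swap i j)) = - cdet M := by
  rcases lt_or_gt_of_ne (fun h : (i : ℕ) = (j : ℕ) => hij (Fin.ext h)) with h | h
  · exact cdet_swap_gen ((j : ℕ) - (i : ℕ) - 1) M hM i j (by omega)
  · rw [Equiv.swap_comm]
    exact cdet_swap_gen ((i : ℕ) - (j : ℕ) - 1) M hM j i (by omega)
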